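/- In a positive T-diagram in which every arrow has a well-defined level, if L is a nontrivial loop that respects the circle's orientation, then L meets at least one marking. (This is the 'if' direction of the level criterion, provable by taking a lowest-level arrow among those used by the loop.) -/

import Mathlib

/-- A Gauss diagram with `n` arrows: the `2n` arrow endpoints are the points of the cyclic group
`ZMod (2*n)` (listed in the cyclic order of the oriented circle), and arrow `a` points from its
underpass point `tail a` to its overpass point `head a`.  The edge `e` of the diagram is the arc
of the circle from the point `e` to the point `e + 1`. -/
structure GaussDiagram (n : ℕ) where
  head : Fin n → ZMod (2 * n)
  tail : Fin n → ZMod (2 * n)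
  inj : Function.Injective (Sum.elim head tail)

namespace GaussDiagram

variable {n : ℕ}

/-- The edge-characteristic vector of the distinguished loop of arrow `a`: it traverses the
edges from `head a` to `tail a` along the orientation of the circle (and returns along the
arrow). -/
def arcChain (G : GaussDiagram n) (a : Fin n) : ZMod (2 * n) → ℤ :=
  fun e => if (e - G.head a).val < (G.tail a - G.head a).val then 1 else 0

/-- The `(n+1) × 2n` matrix whose rows are the edge-characteristic vectors of the `n`
distinguished loops together with the full circle (the all-ones row, indexed by `none`). -/
def loopMatrix (G : GaussDiagram n) : Matrix (Option (Fin n)) (ZMod (2 * n)) ℤ :=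
  fun r e => r.elim 1 fun a => G.arcChain a e

/-- The elementary refinement move of type II+ at arrow `a`: add `+1` on the edge directly
following each endpoint of `a` and `-1` on the edge directly preceding it (with multiplicity). -/
def moveVec (G : GaussDiagram n) (a : Fin n) : ZMod (2 * n) → ℤ :=
  fun e => (if e = G.head a then 1 else 0) + (if e = G.tail a then 1 else 0)
    - (if e = G.head a - 1 then 1 else 0) - (if e = G.tail a - 1 then 1 else 0)

/-- The edge `e` (from point `e` to point `e+1`) is adjacent to the arrow `a` if one of its two
boundary points is an endpoint of `a`. -/
def adjacent (G : GaussDiagram n) (e : ZMod (2 * n)) (a : Fin n) : Prop :=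
  e = G.head a ∨ e + 1 = G.head a ∨ e = G.tail a ∨ e + 1 = G.tail a

end GaussDiagram

/-- A move of a loop in a Gauss diagram: either follow the next edge of the circle in the
direction of its orientation (`circ`), or jump along an arrow, in either direction. -/
inductive Move (n : ℕ) where
  | circ : Move n
  | jumpHT : Fin n → Move n
  | jumpTH : Fin n → Move n

/-- Whether a move is a jump along an arrow. -/
def Move.isJump {n : ℕ} : Move n → Prop
  | .circ => False
  | _ => True

namespace GaussDiagram

/-- The point reached by performing one move starting at the point `p`. -/
def target (G : GaussDiagram n) (p : ZMod (2 * n)) : Move n → ZMod (2 * n)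
  | .circ => p + 1
  | .jumpHT a => G.tail a
  | .jumpTH a => G.head a

/-- Validity of a sequence of moves starting at `p`: a jump along an arrow may only be performed
from an endpoint of that arrow. -/
def validFrom (G : GaussDiagram n) : ZMod (2 * n) → List (Move n) → Prop
  | _, [] => True
  | p, mv :: r =>
      (match mv with
        | .circ => True
        | .jumpHT a => p = G.head a
        | .jumpTH a => p = G.tail a) ∧ validFrom G (G.target p mv) r

/-- The point reached after performing a sequence of moves from `p`. -/
def run (G : GaussDiagram n) : ZMod (2 * n) → List (Move n) → ZMod (2 * n)
  | p, [] => p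
  | p, mv :: r => run G (G.target p mv) r

/-- A loop in the Gauss diagram which respects the orientation of the circle: a closed valid
sequence of moves (circle arcs are always traversed in the orientation direction, arrows may be
traversed both ways). -/
structure Loop (G : GaussDiagram n) where
  start : ZMod (2 * n)
  moves : List (Move n)
  valid : G.validFrom start moves
  closed : G.run start moves = start

/-- A loop is *reduced* (nontrivial) if it is nonempty and never backtracks: no two cyclically
consecutive moves are jumps (two consecutive jumps necessarily cancel along the same arrow). -/
def Loop.Reduced {G : GaussDiagram n} (L : Loop G) : Prop :=
  L.moves ≠ [] ∧
  L.moves.Chain' (fun m₁ m₂ => ¬(m₁.isJump ∧ m₂.isJump)) ∧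
  ∀ m₁ ∈ L.moves.getLast?, ∀ m₂ ∈ L.moves.head?, ¬(m₁.isJump ∧ m₂.isJump)

/-- Whether a sequence of moves from `p` meets a marking of the marking function `m` (which
records the number of (positive) markings on each edge). -/
def meetsFrom (G : GaussDiagram n) (m : ZMod (2 * n) → ℕ) :
    ZMod (2 * n) → List (Move n) → Prop
  | _, [] => False
  | p, .circ :: r => 0 < m p ∨ meetsFrom G m (p + 1) r
  | _, .jumpHT a :: r => meetsFrom G m (G.tail a) r
  | _, .jumpTH a :: r => meetsFrom G m (G.head a) r

/-- A loop meets a marking if one of the circle arcs it traverses carries a marking. -/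
def Loop.Meets {G : GaussDiagram n} (m : ZMod (2 * n) → ℕ) (L : Loop G) : Prop :=
  G.meetsFrom m L.start L.moves

/-- In the diagram obtained by deleting the arrows of `R`, the point `p` is directly preceded by
a marking: going backwards along the circle from `p` one finds a marking before meeting any
endpoint of a non-deleted arrow. -/
def precededBy (G : GaussDiagram n) (m : ZMod (2 * n) → ℕ) (R : Set (Fin n))
    (p : ZMod (2 * n)) : Prop :=
  ∃ j : ℕ, 0 < m (p - 1 - (j : ZMod (2 * n))) ∧
    ∀ i < j, ∃ a ∈ R, G.head a = p - 1 - (i : ZMod (2 * n)) ∨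
      G.tail a = p - 1 - (i : ZMod (2 * n))

/-- The set of arrows removed after `k` rounds of deleting the arrows of level `1` (those whose
two endpoints are both directly preceded by a marking in the current diagram). -/
def removedAt (G : GaussDiagram n) (m : ZMod (2 * n) → ℕ) : ℕ → Set (Fin n)
  | 0 => ∅
  | k + 1 => removedAt G m k ∪
      {a | G.precededBy m (removedAt G m k) (G.head a) ∧
           G.precededBy m (removedAt G m k) (G.tail a)}

/-- An arrow has a well-defined level if it is eventually deleted in the level process. -/
def HasLevel (G : GaussDiagram n) (m : ZMod (2 * n) → ℕ) (a : Fin n) : Prop :=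
  ∃ k, a ∈ G.removedAt m k

/-- The number of times a sequence of moves from `p` traverses each edge of the circle. -/
def edgeCount (G : GaussDiagram n) : ZMod (2 * n) → List (Move n) → ZMod (2 * n) → ℤ
  | _, [] => 0
  | p, .circ :: r => fun e => (if e = p then 1 else 0) + edgeCount G (p + 1) r e
  | _, .jumpHT a :: r => edgeCount G (G.tail a) r
  | _, .jumpTH a :: r => edgeCount G (G.head a) r

/-- The net number of traversals of each arrow, counted positively in the tail-to-head
direction (the direction used by the distinguished loops). -/
def netJump {n : ℕ} : List (Move n) → Fin n → ℤ
  | [] => 0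
  | .circ :: r => netJump r
  | .jumpHT a :: r => fun b => netJump r b - (if b = a then 1 else 0)
  | .jumpTH a :: r => fun b => (if b = a then 1 else 0) + netJump r b

/-- `y` is a refinement of the decorated Gauss diagram with arrow valuations `dA` and circle
valuation `d`: the sum of the markings along each distinguished loop is the corresponding
valuation, and the total sum is the valuation of the circle. -/
def IsRefinement [NeZero (2 * n)] (G : GaussDiagram n) (dA : Fin n → ℤ) (d : ℤ)
    (y : ZMod (2 * n) → ℤ) : Prop :=
  (∀ a, ∑ e, G.arcChain a e * y e = dA a) ∧ ∑ e, y e = d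

/-- The homology class in `H₁(ℝ × S¹) = ℤ` of a loop of the decorated Gauss diagram with arrow
valuations `dA` and circle valuation `d`, computed by expressing the cycle of the loop in the
basis formed by the distinguished loops and the circle. -/
def loopClass [NeZero (2 * n)] (G : GaussDiagram n) (dA : Fin n → ℤ) (d : ℤ)
    (L : Loop G) : ℤ :=
  ∑ a, netJump L.moves a * dA a +
    (G.edgeCount L.start L.moves 0 - ∑ a, netJump L.moves a * G.arcChain a 0) * d

end GaussDiagram

namespace GaussDiagram

variable {n : ℕ} (G : GaussDiagram n) (m : ZMod (2 * n) → ℕ)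

theorem run_append (p : ZMod (2 * n)) (l1 l2 : List (Move n)) :
    G.run p (l1 ++ l2) = G.run (G.run p l1) l2 := by
  induction l1 generalizing p with
  | nil => rfl
  | cons mv r ih => simp [run, ih]

theorem meetsFrom_append (p : ZMod (2 * n)) (l1 l2 : List (Move n)) :
    G.meetsFrom m p (l1 ++ l2) ↔ G.meetsFrom m p l1 ∨ G.meetsFrom m (G.run p l1) l2 := by
  induction l1 generalizing p with
  | nil => simp [meetsFrom, run]
  | cons mv r ih =>
    cases mv <;> simp [meetsFrom, run, target, ih, or_assoc]

theorem validFrom_append (p : ZMod (2 * n)) (l1 l2 : List (Move n)) :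
    G.validFrom p (l1 ++ l2) ↔ G.validFrom p l1 ∧ G.validFrom (G.run p l1) l2 := by
  induction l1 generalizing p with
  | nil => simp [validFrom, run]
  | cons mv r ih =>
    cases mv <;> simp [validFrom, run, ih, and_assoc]

/-- iterated concatenation of a list -/
def rep (l : List (Move n)) : ℕ → List (Move n)
  | 0 => []
  | k + 1 => l ++ rep l k

theorem run_rep (p : ZMod (2 * n)) (l : List (Move n)) (h : G.run p l = p) (k : ℕ) :
    G.run p (rep l k) = p := by
  induction k with
  | zero => rfl
  | succ k ih => rw [rep, run_append, h, ih]

theorem length_rep (l : List (Move n)) (k : ℕ) : (rep l k).length = k * l.length := by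
  induction k with
  | zero => simp [rep]
  | succ k ih => simp [rep, ih, Nat.succ_mul, Nat.add_comm]

theorem mem_rep {l : List (Move n)} {k : ℕ} {mv : Move n} (h : mv ∈ rep l k) : mv ∈ l := by
  induction k with
  | zero => simp [rep] at h
  | succ k ih => rcases List.mem_append.1 h with h | h; exact h; exact ih h

theorem meetsFrom_rep (p : ZMod (2 * n)) (l : List (Move n)) (h : G.run p l = p) (k : ℕ)
    (hme : G.meetsFrom m p (rep l k)) : G.meetsFrom m p l := by
  induction k with
  | zero => simp [rep, meetsFrom] at hme
  | succ k ih =>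
    rw [rep, meetsFrom_append, h] at hme
    exact hme.elim id ih

theorem run_circ (p : ZMod (2 * n)) (l : List (Move n)) (h : ∀ mv ∈ l, mv = Move.circ) :
    G.run p l = p + l.length := by
  induction l generalizing p with
  | nil => simp [run]
  | cons mv r ih =>
    have := h mv List.mem_cons_self
    subst this
    rw [run, ih _ (fun x hx => h x (List.mem_cons_of_mem _ hx))]
    simp [target]
    ring

theorem meetsFrom_circ (p : ZMod (2 * n)) (l : List (Move n)) (h : ∀ mv ∈ l, mv = Move.circ)
    (i : ℕ) (hi : i < l.length) (hmi : 0 < m (p + i)) : G.meetsFrom m p l := by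
  induction l generalizing p i with
  | nil => simp at hi
  | cons mv r ih =>
    have := h mv List.mem_cons_self
    subst this
    rw [meetsFrom]
    cases i with
    | zero => left; simpa using hmi
    | succ i =>
      right
      refine ih _ (fun x hx => h x (List.mem_cons_of_mem _ hx)) i (by simpa using hi) ?_
      convert hmi using 2
      push_cast
      ring

end GaussDiagram
namespace GaussDiagram

variable {n : ℕ} (G : GaussDiagram n) (m : ZMod (2 * n) → ℕ)

theorem back (j : ℕ) : ∀ (ms : List (Move n)) (s : ZMod (2 * n)) (A : Set (Fin n)),
    j + 1 ≤ ms.length →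
    (∀ mv ∈ ms.getLast?, mv = Move.circ) →
    (∀ b : Fin n, (Move.jumpHT b ∈ ms ∨ Move.jumpTH b ∈ ms) → b ∈ A) →
    (∀ i : ℕ, i < j → ∀ b ∈ A,
      G.head b ≠ G.run s ms - 1 - (i : ZMod (2 * n)) ∧
      G.tail b ≠ G.run s ms - 1 - (i : ZMod (2 * n))) →
    0 < m (G.run s ms - 1 - (j : ZMod (2 * n))) →
    G.meetsFrom m s ms := by
  induction j with
  | zero =>
    intro ms s A hlen hlast hA hend hmark
    rcases ms.eq_nil_or_concat with rfl | ⟨L, b, rfl⟩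
    · simp at hlen
    · simp only [List.concat_eq_append] at hlast hmark ⊢
      have hb : b = Move.circ := hlast b (by simp)
      subst hb
      rw [meetsFrom_append]
      right
      rw [run_append] at hmark
      simp only [run, target] at hmark ⊢
      rw [meetsFrom]
      left
      simpa using hmark
  | succ j ih =>
    intro ms s A hlen hlast hA hend hmark
    rcases ms.eq_nil_or_concat with rfl | ⟨L, b, rfl⟩
    · simp at hlen
    · simp only [List.concat_eq_append] at hlen hlast hA hend hmark ⊢
      have hb : b = Move.circ := hlast b (by simp)
      subst hb
      have hq : G.run s (L ++ [Move.circ]) = G.run s L + 1 := by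
        rw [run_append]; rfl
      rw [hq] at hend hmark
      have key : ∀ i : ℕ, G.run s L - 1 - (i : ZMod (2 * n)) =
          G.run s L + 1 - 1 - ((i + 1 : ℕ) : ZMod (2 * n)) := by
        intro i; push_cast; ring
      rw [meetsFrom_append]
      left
      have hlen' : j + 1 ≤ L.length := by
        simp at hlen; omega
      refine ih L s A hlen' ?_ ?_ ?_ ?_
      · -- last of L is circ
        intro mv hmv
        rcases L.eq_nil_or_concat with rfl | ⟨L', b', rfl⟩
        · simp at hlen'
        · simp only [List.concat_eq_append, List.getLast?_concat, Option.mem_def,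
            Option.some.injEq] at hmv
          subst hmv
          cases b' with
          | circ => rfl
          | jumpHT c =>
            exfalso
            have hc : c ∈ A := hA c (by simp)
            refine (hend 0 (by omega) c hc).2 ?_
            rw [List.concat_eq_append, run_append]
            simp [run, target]
          | jumpTH c =>
            exfalso
            have hc : c ∈ A := hA c (by simp)
            refine (hend 0 (by omega) c hc).1 ?_
            rw [List.concat_eq_append, run_append]
            simp [run, target]
      · intro b hbmem
        refine hA b ?_
        rcases hbmem with h | h
        · left; exact List.mem_append_left _ h
        · right; exact List.mem_append_left _ h
      · intro i hi b hbA
        rw [key i]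
        exact hend (i + 1) (by omega) b hbA
      · rw [key j]
        exact hmark

end GaussDiagram
namespace GaussDiagram

variable {n : ℕ} (G : GaussDiagram n)

theorem eq_of_head_eq_head {b c : Fin n} (h : G.head b = G.head c) : b = c := by
  have := G.inj (a₁ := Sum.inl b) (a₂ := Sum.inl c) (by simpa using h)
  simpa using this

theorem not_head_eq_tail {b c : Fin n} (h : G.head b = G.tail c) : False := by
  have := G.inj (a₁ := Sum.inl b) (a₂ := Sum.inr c) (by simpa using h)
  simp at this

theorem eq_of_tail_eq_tail {b c : Fin n} (h : G.tail b = G.tail c) : b = c := by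
  have := G.inj (a₁ := Sum.inr b) (a₂ := Sum.inr c) (by simpa using h)
  simpa using this

end GaussDiagram

/-- In a positive T-diagram in which every arrow has a well-defined level, every nontrivial
orientation-respecting loop meets at least one marking. -/
theorem stmt11 (n : ℕ) (G : GaussDiagram n) (m : ZMod (2 * n) → ℕ) (hm : ∃ e, 0 < m e)
    (hlev : ∀ a, G.HasLevel m a) :
    ∀ L : GaussDiagram.Loop G, L.Reduced → L.Meets m := by
  classical
  intro L hred
  obtain ⟨hne, hchain, hcyc⟩ := hred
  set s := L.start with hs
  by_cases hallcirc : ∀ mv ∈ L.moves, mv = Move.circ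
  · -- the loop has no jumps: it winds around the circle, hence meets the marked edge
    obtain ⟨e, he⟩ := hm
    have hrun := L.closed
    rw [G.run_circ s L.moves hallcirc] at hrun
    have h0 : ((L.moves.length : ℕ) : ZMod (2 * n)) = 0 := by
      rwa [add_eq_left] at hrun
    have hdvd : 2 * n ∣ L.moves.length :=
      (CharP.cast_eq_zero_iff (ZMod (2 * n)) (2 * n) _).1 h0
    have hlenpos : 0 < L.moves.length := List.length_pos_iff.2 hne
    have h2n : 0 < 2 * n := by
      rcases Nat.eq_zero_or_pos (2 * n) with h | h
      · rw [h] at hdvd; omega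
      · exact h
    haveI : NeZero (2 * n) := ⟨by omega⟩
    have hlen2 : 2 * n ≤ L.moves.length := Nat.le_of_dvd hlenpos hdvd
    refine G.meetsFrom_circ m s L.moves hallcirc (e - s).val
      (lt_of_lt_of_le (ZMod.val_lt _) hlen2) ?_
    have : s + (((e - s).val : ℕ) : ZMod (2 * n)) = e := by
      rw [ZMod.natCast_val, ZMod.cast_id]; ring
    rwa [this]
  · -- the loop uses at least one arrow
    push_neg at hallcirc
    obtain ⟨mv0, hmv0mem, hmv0ne⟩ := hallcirc
    set A : Set (Fin n) :=
      {b | Move.jumpHT b ∈ L.moves ∨ Move.jumpTH b ∈ L.moves} with hA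
    have hAne : ∃ k, ∃ a ∈ A, a ∈ G.removedAt m k := by
      cases mv0 with
      | circ => exact absurd rfl hmv0ne
      | jumpHT b => obtain ⟨k, hk⟩ := hlev b; exact ⟨k, b, Or.inl hmv0mem, hk⟩
      | jumpTH b => obtain ⟨k, hk⟩ := hlev b; exact ⟨k, b, Or.inr hmv0mem, hk⟩
    obtain ⟨a, haA, haRem⟩ := Nat.find_spec hAne
    have hk0pos : 0 < Nat.find hAne := by
      rcases Nat.eq_zero_or_pos (Nat.find hAne) with h | h
      · rw [h] at haRem; exact absurd haRem (by simp [GaussDiagram.removedAt])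
      · exact h
    obtain ⟨k', hk'⟩ : ∃ k', Nat.find hAne = k' + 1 := ⟨Nat.find hAne - 1, by omega⟩
    set R := G.removedAt m k' with hR
    have hdisj : ∀ b ∈ A, b ∉ R := by
      intro b hbA hbR
      exact Nat.find_min hAne (m := k') (by omega) ⟨b, hbA, hbR⟩
    have hlevel1 : G.precededBy m R (G.head a) ∧ G.precededBy m R (G.tail a) := by
      have h1 : G.removedAt m (k' + 1) = R ∪
          {b | G.precededBy m R (G.head b) ∧ G.precededBy m R (G.tail b)} := rfl
      rw [hk', h1] at haRem
      rcases haRem with h | h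
      · exact absurd h (hdisj a haA)
      · exact h
    -- pick an occurrence of a jump along `a` in the loop
    have hamem : Move.jumpHT a ∈ L.moves ∨ Move.jumpTH a ∈ L.moves := haA
    obtain ⟨mvA, hmvAmem, hmvA⟩ :
        ∃ mvA ∈ L.moves, mvA = Move.jumpHT a ∨ mvA = Move.jumpTH a := by
      rcases hamem with h | h
      · exact ⟨_, h, Or.inl rfl⟩
      · exact ⟨_, h, Or.inr rfl⟩
    obtain ⟨l1, l2, hsplit⟩ := List.append_of_mem hmvAmem
    set q := G.run s l1 with hq
    set t := G.target q mvA with ht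
    -- basic facts about the jump move mvA
    have hvalid := L.valid
    rw [← hs, hsplit, G.validFrom_append] at hvalid
    have hqep : q = G.head a ∨ q = G.tail a := by
      rcases hmvA with rfl | rfl
      · exact Or.inl hvalid.2.1
      · exact Or.inr hvalid.2.1
    have htep : t = G.tail a ∨ t = G.head a := by
      rcases hmvA with rfl | rfl
      · exact Or.inl rfl
      · exact Or.inr rfl
    have htarget : ∀ p, G.target p mvA = t := by
      rcases hmvA with rfl | rfl <;> intro p <;> rfl
    have hmeets_cons : ∀ p r, G.meetsFrom m p (mvA :: r) = G.meetsFrom m t r := by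
      rcases hmvA with rfl | rfl <;> intro p r <;> rfl
    have hrun_cons : ∀ p r, G.run p (mvA :: r) = G.run t r := by
      rcases hmvA with rfl | rfl <;> intro p r <;> rfl
    have hjumpA : mvA.isJump := by
      rcases hmvA with rfl | rfl <;> trivial
    -- the closure facts
    have hclosed := L.closed
    rw [← hs, hsplit, G.run_append] at hclosed
    rw [← hq, hrun_cons] at hclosed
    -- hclosed : G.run t l2 = s
    have hpreq : G.precededBy m R q := by
      rcases hqep with h | h
      · rw [h]; exact hlevel1.1
      · rw [h]; exact hlevel1.2
    obtain ⟨j, hmark, hcov⟩ := hpreq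
    -- the big path: j+1 copies of the rotated loop followed by the loop minus the jump
    set rot : List (Move n) := l2 ++ l1 ++ [mvA] with hrot
    have hrunrot : G.run t rot = t := by
      rw [hrot, G.run_append, G.run_append, hclosed, ← hq]
      simp [GaussDiagram.run, htarget]
    set MS : List (Move n) := GaussDiagram.rep rot (j + 1) ++ (l2 ++ l1) with hMS
    have hrunMS : G.run t MS = q := by
      rw [hMS, G.run_append, G.run_rep t rot hrunrot, G.run_append, hclosed]
    -- jumps of MS come from the loop
    have hjumps : ∀ b : Fin n, (Move.jumpHT b ∈ MS ∨ Move.jumpTH b ∈ MS) → b ∈ A := by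
      have hsub : ∀ mv : Move n, mv ∈ MS → mv ∈ L.moves := by
        intro mv hmv
        rw [hMS] at hmv
        rw [hsplit]
        rcases List.mem_append.1 hmv with h | h
        · have := GaussDiagram.mem_rep (n := n) h
          rw [hrot] at this
          rcases List.mem_append.1 this with h' | h'
          · rcases List.mem_append.1 h' with h'' | h''
            · exact List.mem_append_right _ (List.mem_cons_of_mem _ h'')
            · exact List.mem_append_left _ h''
          · simp at h'
            rw [h']
            exact List.mem_append_right _ List.mem_cons_self
        · rcases List.mem_append.1 h with h' | h'
          · exact List.mem_append_right _ (List.mem_cons_of_mem _ h')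
          · exact List.mem_append_left _ h'
      intro b hb
      rcases hb with h | h
      · exact Or.inl (hsub _ h)
      · exact Or.inr (hsub _ h)
    -- the last move of MS is a circle move
    have hlast : ∀ mv ∈ MS.getLast?, mv = Move.circ := by
      intro mv hmv
      have hnotjump : ¬ mv.isJump := by
        rcases List.eq_nil_or_concat l1 with rfl | ⟨l1', x, rfl⟩
        · rcases List.eq_nil_or_concat l2 with rfl | ⟨l2', y, rfl⟩
          · -- single-move loop: impossible by the cyclic condition
            exfalso
            have h1 : L.moves = [mvA] := by simpa using hsplit
            have := hcyc mvA (by simp [h1]) mvA (by simp [h1])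
            exact this ⟨hjumpA, hjumpA⟩
          · -- l1 = [], l2 ends with y: mv = y, use the cyclic condition
            have hmv' : mv = y := by
              rw [hMS] at hmv
              rw [List.append_nil,
                List.getLast?_append_of_ne_nil _ (by simp : l2'.concat y ≠ []),
                List.concat_eq_append, List.getLast?_concat] at hmv
              exact (by simpa using hmv : y = mv).symm
            subst hmv'
            have hL : L.moves = mvA :: (l2'.concat mv) := by simpa using hsplit
            have hlast2 : L.moves.getLast? = some mv := by
              rw [hL, show mvA :: l2'.concat mv = (mvA :: l2') ++ [mv] by simp]
              exact List.getLast?_concat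
            have hhead2 : L.moves.head? = some mvA := by rw [hL]; rfl
            have := hcyc mv (by simp [hlast2]) mvA (by simp [hhead2])
            intro hj
            exact this ⟨hj, hjumpA⟩
        · -- l1 ends with x: mv = x, use the chain condition against mvA
          have hmv' : mv = x := by
            rw [hMS] at hmv
            rw [List.getLast?_append_of_ne_nil _ (by simp : l2 ++ l1'.concat x ≠ []),
              List.getLast?_append_of_ne_nil _ (by simp : l1'.concat x ≠ []),
              List.concat_eq_append, List.getLast?_concat] at hmv
            exact (by simpa using hmv : x = mv).symm
          subst hmv'
          rw [hsplit] at hchain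
          obtain ⟨-, -, hrel⟩ := List.isChain_append.1 hchain
          have := hrel mv (by simp [List.getLast?_concat]) mvA (by rfl)
          intro hj
          exact this ⟨hj, hjumpA⟩
      cases mv with
      | circ => rfl
      | jumpHT c => exact absurd trivial hnotjump
      | jumpTH c => exact absurd trivial hnotjump
    -- MS is long enough
    have hlenMS : j + 1 ≤ MS.length := by
      have h1 : (GaussDiagram.rep rot (j + 1)).length = (j + 1) * rot.length :=
        GaussDiagram.length_rep (n := n) rot (j + 1)
      have h2 : 0 < rot.length := by rw [hrot]; simp
      have h3 := Nat.le_mul_of_pos_right (j + 1) h2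
      rw [hMS]
      rw [List.length_append, h1]
      omega
    -- no endpoint of a used arrow lies in the marked stretch behind q
    have hend : ∀ i : ℕ, i < j → ∀ b ∈ A,
        G.head b ≠ G.run t MS - 1 - (i : ZMod (2 * n)) ∧
        G.tail b ≠ G.run t MS - 1 - (i : ZMod (2 * n)) := by
      intro i hi b hbA
      rw [hrunMS]
      obtain ⟨c, hcR, hc⟩ := hcov i hi
      have hbc : b ≠ c := by
        intro h; subst h; exact hdisj b hbA hcR
      constructor
      · intro h
        rcases hc with hc | hc
        · exact hbc (G.eq_of_head_eq_head (h.trans hc.symm))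
        · exact G.not_head_eq_tail (h.trans hc.symm)
      · intro h
        rcases hc with hc | hc
        · exact G.not_head_eq_tail (hc.trans h.symm)
        · exact hbc (G.eq_of_tail_eq_tail (h.trans hc.symm))
    -- apply the backward-walk lemma
    have hmeetMS : G.meetsFrom m t MS := by
      refine G.back m j MS t A hlenMS hlast hjumps hend ?_
      rw [hrunMS]
      exact hmark
    -- transfer the meeting back to the original loop
    rw [hMS, G.meetsFrom_append, G.run_rep t rot hrunrot] at hmeetMS
    have hmeet2 : G.meetsFrom m t (l2 ++ l1) := by
      rcases hmeetMS with h | h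
      · have := G.meetsFrom_rep m t rot hrunrot (j + 1) h
        rw [hrot, G.meetsFrom_append, G.run_append, hclosed, ← hq] at this
        rcases this with h' | h'
        · exact h'
        · rw [hmeets_cons] at h'
          simp [GaussDiagram.meetsFrom] at h'
      · exact h
    rw [G.meetsFrom_append, hclosed] at hmeet2
    show G.meetsFrom m s L.moves
    rw [hsplit, G.meetsFrom_append, ← hq, hmeets_cons]
    tauto
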